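/- Consider one-dimensional AGD applied to f(x) = -(γ/2)x², with parameters η > 0 and θ ∈ (0, 1/4], updates y_t = x_t + (1-θ)v_t, x_{t+1} = y_t - η f'(y_t), v_{t+1} = x_{t+1} - x_t, and define the Hamiltonian E_t = f(x_t) + (1/(2η))v_t². Starting from x_0 = -1, v_0 = 1/(1-θ), if γ ≥ 4θ/η then E_1 ≥ E_0; i.e., one AGD step increases the Hamiltonian. -/

import Mathlib

theorem agd_can_increase_hamiltonian (γ η θ : ℝ)
    (hη : 0 < η) (hθ : 0 < θ) (hθ' : θ ≤ 1/4) (hγ : 4 * θ / η ≤ γ)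
    (x₀ v₀ y₀ x₁ v₁ : ℝ)
    (hx₀ : x₀ = -1) (hv₀ : v₀ = 1 / (1 - θ))
    (hy₀ : y₀ = x₀ + (1 - θ) * v₀)
    (hx₁ : x₁ = y₀ - η * (-(γ * y₀)))
    (hv₁ : v₁ = x₁ - x₀) :
    -(γ / 2) * x₀ ^ 2 + v₀ ^ 2 / (2 * η) ≤ -(γ / 2) * x₁ ^ 2 + v₁ ^ 2 / (2 * η) := by
  have h1 : (0 : ℝ) < 1 - θ := by linarith
  have hy : y₀ = 0 := by
    rw [hy₀, hx₀, hv₀]; field_simp; norm_num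
  have hγ' : 4 * θ ≤ η * γ := by
    rw [div_le_iff₀ hη] at hγ; linarith
  subst hv₁ hx₁ hx₀ hv₀
  rw [hy]
  have h2 : (0:ℝ) < (1 - θ)^2 := by positivity
  have hv : (1 / (1 - θ)) ^ 2 = 1 / (1 - θ) ^ 2 := by rw [div_pow, one_pow]
  rw [hv, div_div]
  have h3 : 1 / ((1 - θ) ^ 2 * (2 * η)) ≤ γ / 2 + 1 / (2 * η) := by
    rw [div_le_iff₀ (by positivity : (0:ℝ) < (1 - θ) ^ 2 * (2 * η))]
    have e : (γ / 2 + 1 / (2 * η)) * ((1 - θ) ^ 2 * (2 * η))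
        = η * γ * (1 - θ) ^ 2 + (1 - θ) ^ 2 := by field_simp
    rw [e]
    nlinarith [mul_le_mul_of_nonneg_right hγ' (le_of_lt h2), sq_nonneg θ, mul_pos hθ hθ]
  ring_nf
  ring_nf at h3
  linarith
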